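/- Let K ≥ 2, Y = {1,...,K}, fix 1 ≤ c ≤ K−1, and let q : Y → ℝ be a nonnegative function. Define p̄(S) = (1/C(K−1,c)) · Σ_{y ∉ S} q(y) for each c-element subset S of Y. Then for every y ∈ Y: q(y) = Σ_{S : |S|=c} p̄(S) − ((K−1)/c) · Σ_{S : |S|=c, y∈S} p̄(S). -/

import Mathlib

open Finset

lemma swap_sum {K : ℕ} (q : Fin K → ℝ) (A : Finset (Finset (Fin K))) :
    ∑ S ∈ A, ∑ z ∈ Sᶜ, q z
      = ∑ z : Fin K, ((A.filter (fun S => z ∉ S)).card : ℝ) * q z := by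
  have h1 : ∀ S : Finset (Fin K), ∑ z ∈ Sᶜ, q z
      = ∑ z : Fin K, if z ∉ S then q z else 0 := by
    intro S
    rw [Finset.sum_ite, Finset.sum_const_zero, add_zero]
    congr 1
    ext z
    simp [Finset.mem_filter, Finset.mem_compl]
  simp_rw [h1]
  rw [Finset.sum_comm]
  congr 1
  ext z
  rw [Finset.sum_ite, Finset.sum_const_zero, add_zero, Finset.sum_const,
    nsmul_eq_mul]

lemma count1 {K : ℕ} (c : ℕ) (z : Fin K) :
    ((Finset.univ.powersetCard c).filter (fun S => z ∉ S)).card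
      = (K - 1).choose c := by
  have hset : (Finset.univ.powersetCard c).filter (fun S => z ∉ S)
      = ({z}ᶜ : Finset (Fin K)).powersetCard c := by
    ext S
    simp only [Finset.mem_filter, Finset.mem_powersetCard, Finset.subset_univ,
      true_and]
    constructor
    · rintro ⟨hc, hz⟩
      refine ⟨fun a ha => ?_, hc⟩
      simp only [Finset.mem_compl, Finset.mem_singleton]
      rintro rfl; exact hz ha
    · rintro ⟨hsub, hc⟩
      refine ⟨hc, fun h => ?_⟩
      have := hsub h
      simp at this
  rw [hset, Finset.card_powersetCard, Finset.card_compl]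
  simp

lemma count2 {K : ℕ} (c : ℕ) (hc1 : 1 ≤ c) (y z : Fin K) (hz : z ≠ y) :
    ((Finset.univ.powersetCard c).filter (fun S => y ∈ S ∧ z ∉ S)).card
      = (K - 2).choose (c - 1) := by
  have hi : ∀ S ∈ (Finset.univ.powersetCard c).filter (fun S => y ∈ S ∧ z ∉ S),
      S.erase y ∈ ({y, z}ᶜ : Finset (Fin K)).powersetCard (c - 1) := by
    intro S hS
    simp only [Finset.mem_filter, Finset.mem_powersetCard, Finset.subset_univ,
      true_and] at hS
    obtain ⟨hcard, hy, hznot⟩ := hS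
    simp only [Finset.mem_powersetCard]
    constructor
    · intro a ha
      simp only [Finset.mem_erase] at ha
      simp only [Finset.mem_compl, Finset.mem_insert, Finset.mem_singleton]
      push_neg
      exact ⟨ha.1, fun h => hznot (h ▸ ha.2)⟩
    · rw [Finset.card_erase_of_mem hy, hcard]
  have hj : ∀ T ∈ ({y, z}ᶜ : Finset (Fin K)).powersetCard (c - 1),
      insert y T ∈ (Finset.univ.powersetCard c).filter (fun S => y ∈ S ∧ z ∉ S) := by
    intro T hT
    simp only [Finset.mem_powersetCard] at hT
    obtain ⟨hsub, hcard⟩ := hT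
    have hyT : y ∉ T := fun h => by
      have := hsub h; simp at this
    have hzT : z ∉ T := fun h => by
      have := hsub h; simp at this
    simp only [Finset.mem_filter, Finset.mem_powersetCard, Finset.subset_univ,
      true_and]
    refine ⟨?_, Finset.mem_insert_self _ _, ?_⟩
    · rw [Finset.card_insert_of_notMem hyT, hcard]; omega
    · simp [Finset.mem_insert, hzT, hz]
  have key := Finset.card_bij' (fun S _ => S.erase y) (fun T _ => insert y T) hi hj
    (fun S hS => by
      simp only [Finset.mem_filter] at hS
      exact Finset.insert_erase hS.2.1)
    (fun T hT => by
      simp only [Finset.mem_powersetCard] at hT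
      have hyT : y ∉ T := fun h => by
        have := hT.1 h; simp at this
      exact Finset.erase_insert hyT)
  rw [key, Finset.card_powersetCard]
  congr 1
  rw [Finset.card_compl, Finset.card_insert_of_notMem (by simp [hz.symm]),
    Finset.card_singleton]
  simp

theorem stmt_3 (K : ℕ) (hK : 2 ≤ K) (c : ℕ) (hc1 : 1 ≤ c) (hc2 : c ≤ K - 1)
    (q : Fin K → ℝ) (hq : ∀ y, 0 ≤ q y) (y : Fin K) :
    q y = (∑ S ∈ Finset.univ.powersetCard c,
            (((K - 1).choose c : ℝ))⁻¹ * ∑ z ∈ Sᶜ, q z)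
        - (((K : ℝ) - 1) / (c : ℝ)) *
            ∑ S ∈ (Finset.univ.powersetCard c).filter (fun S => y ∈ S),
              (((K - 1).choose c : ℝ))⁻¹ * ∑ z ∈ Sᶜ, q z := by
  set N : ℕ := (K - 1).choose c with hN
  have hNpos : 0 < N := Nat.choose_pos hc2
  have hNne : (N : ℝ) ≠ 0 := Nat.cast_ne_zero.mpr hNpos.ne'
  set M : ℕ := (K - 2).choose (c - 1) with hM
  have hchoose : (K - 1) * M = N * c := by
    have h := Nat.add_one_mul_choose_eq (K - 2) (c - 1)
    have h1 : K - 2 + 1 = K - 1 := by omega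
    have h2 : c - 1 + 1 = c := by omega
    rw [h1, h2] at h
    simpa [hN, hM] using h
  have e1 : ∑ S ∈ Finset.univ.powersetCard c,
      ((N : ℝ))⁻¹ * ∑ z ∈ Sᶜ, q z = ∑ z : Fin K, q z := by
    rw [← Finset.mul_sum, swap_sum]
    have hc : ∀ z : Fin K,
        (((Finset.univ.powersetCard c).filter (fun S => z ∉ S)).card : ℝ) * q z
          = (N : ℝ) * q z := by
      intro z; rw [count1]
    simp_rw [hc]
    rw [← Finset.mul_sum, ← mul_assoc, inv_mul_cancel₀ hNne, one_mul]
  have e2 : ∑ S ∈ (Finset.univ.powersetCard c).filter (fun S => y ∈ S),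
      ((N : ℝ))⁻¹ * ∑ z ∈ Sᶜ, q z
        = (N : ℝ)⁻¹ * (M : ℝ) * ∑ z ∈ Finset.univ.erase y, q z := by
    rw [← Finset.mul_sum, swap_sum]
    have hcount : ∀ z : Fin K,
        ((((Finset.univ.powersetCard c).filter (fun S => y ∈ S)).filter
            (fun S => z ∉ S)).card : ℝ) * q z
          = if z = y then 0 else (M : ℝ) * q z := by
      intro z
      rw [Finset.filter_filter]
      by_cases h : z = y
      · subst h
        have he : (Finset.univ.powersetCard c).filter (fun S => z ∈ S ∧ z ∉ S) = ∅ := by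
          apply Finset.filter_false_of_mem
          intro S _
          tauto
        simp [he]
      · rw [count2 c hc1 y z h]
        simp [h, hM]
    simp_rw [hcount]
    rw [Finset.sum_ite, Finset.sum_const_zero, zero_add, Finset.filter_ne',
      ← Finset.mul_sum, ← mul_assoc]
  rw [e1, e2]
  have hMN : ((K : ℝ) - 1) / (c : ℝ) * ((N : ℝ)⁻¹ * (M : ℝ)) = 1 := by
    have hc0 : (c : ℝ) ≠ 0 := by positivity
    have hK1 : ((K : ℝ) - 1) = ((K - 1 : ℕ) : ℝ) := by
      push_cast [Nat.cast_sub (by omega : 1 ≤ K)]; ring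
    have h3 : ((K : ℝ) - 1) * (M : ℝ) = (N : ℝ) * (c : ℝ) := by
      rw [hK1]; exact_mod_cast congrArg (Nat.cast : ℕ → ℝ) hchoose
    field_simp
    linear_combination h3
  rw [show (((K : ℝ) - 1) / (c : ℝ)) * ((N : ℝ)⁻¹ * (M : ℝ) * ∑ z ∈ Finset.univ.erase y, q z)
      = ((((K : ℝ) - 1) / (c : ℝ)) * ((N : ℝ)⁻¹ * (M : ℝ))) * ∑ z ∈ Finset.univ.erase y, q z
    from by ring, hMN, one_mul]
  have hs := Finset.add_sum_erase Finset.univ q (Finset.mem_univ y)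
  linarith [hs]
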